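/- The Casimir element C = Σ_{w ∈ S_n} q^{-l(w)} T_w ⊗ T_{w^{-1}} in H_n ⊗ H_n^{op} is central in the sense that for every generator T_i, Σ_w q^{-l(w)} T_i T_w ⊗ T_{w^{-1}} = Σ_w q^{-l(w)} T_w ⊗ T_{w^{-1}} T_i. -/

import Mathlib

open scoped TensorProduct

/-- The Coxeter length of a permutation of `Fin n`: the minimal length of a word
in the adjacent transpositions `(i, i+1)` expressing it. -/
noncomputable def permLength {n : ℕ} (w : Equiv.Perm (Fin n)) : ℕ :=
  sInf {k : ℕ | ∃ l : List (Equiv.Perm (Fin n)),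
    l.length = k ∧
    (∀ s ∈ l, ∃ (i : Fin n) (h : (i : ℕ) + 1 < n), s = Equiv.swap i ⟨(i : ℕ) + 1, h⟩) ∧
    l.prod = w}

namespace Stmt5Aux

open Equiv

variable {n : ℕ}

/-- Adjacent transposition predicate. -/
def Adj (s : Equiv.Perm (Fin n)) : Prop :=
  ∃ (i : Fin n) (h : (i : ℕ) + 1 < n), s = Equiv.swap i ⟨(i : ℕ) + 1, h⟩

lemma Adj.ne_one {s : Equiv.Perm (Fin n)} (hs : Adj s) : s ≠ 1 := by
  obtain ⟨i, h, rfl⟩ := hs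
  rw [Ne, Equiv.swap_eq_one_iff]
  intro hij
  have := congrArg Fin.val hij
  simp at this

lemma Adj.sq {s : Equiv.Perm (Fin n)} (hs : Adj s) : s * s = 1 := by
  obtain ⟨i, h, rfl⟩ := hs
  exact Equiv.swap_mul_self _ _

lemma Adj.inv_eq {s : Equiv.Perm (Fin n)} (hs : Adj s) : s⁻¹ = s := by
  obtain ⟨i, h, rfl⟩ := hs
  exact Equiv.swap_inv _ _

lemma Adj.sign {s : Equiv.Perm (Fin n)} (hs : Adj s) : Equiv.Perm.sign s = -1 := by
  obtain ⟨i, h, rfl⟩ := hs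
  refine Equiv.Perm.sign_swap ?_
  intro hij
  have := congrArg Fin.val hij
  simp at this

lemma exists_word (w : Equiv.Perm (Fin n)) :
    ∃ l : List (Equiv.Perm (Fin n)), (∀ s ∈ l, Adj s) ∧ l.prod = w := by
  cases n with
  | zero =>
    refine ⟨[], by simp, ?_⟩
    simp [Subsingleton.elim w 1]
  | succ m =>
    have hw : w ∈ Submonoid.closure
        (Set.range fun i : Fin m ↦ Equiv.swap i.castSucc i.succ) := by
      rw [Equiv.Perm.mclosure_swap_castSucc_succ m]; trivial
    obtain ⟨l, hl, hprod⟩ := Submonoid.exists_list_of_mem_closure hw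
    refine ⟨l, ?_, hprod⟩
    intro s hsl
    obtain ⟨i, rfl⟩ := hl s hsl
    exact ⟨i.castSucc, by simp, rfl⟩

lemma permLength_le {w : Equiv.Perm (Fin n)} {l : List (Equiv.Perm (Fin n))}
    (hadj : ∀ s ∈ l, Adj s) (hprod : l.prod = w) : permLength w ≤ l.length :=
  Nat.sInf_le ⟨l, rfl, hadj, hprod⟩

lemma exists_min_word (w : Equiv.Perm (Fin n)) :
    ∃ l : List (Equiv.Perm (Fin n)),
      l.length = permLength w ∧ (∀ s ∈ l, Adj s) ∧ l.prod = w := by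
  obtain ⟨l, hadj, hprod⟩ := exists_word w
  exact Nat.sInf_mem (⟨l.length, l, rfl, hadj, hprod⟩ :
    Set.Nonempty {k : ℕ | ∃ l : List (Equiv.Perm (Fin n)),
      l.length = k ∧ (∀ s ∈ l, Adj s) ∧ l.prod = w})

lemma permLength_one : permLength (1 : Equiv.Perm (Fin n)) = 0 :=
  Nat.le_zero.mp (permLength_le (l := []) (by simp) (by simp))

lemma eq_one_of_permLength_eq_zero {w : Equiv.Perm (Fin n)} (hw : permLength w = 0) :
    w = 1 := by
  obtain ⟨l, hlen, _, hprod⟩ := exists_min_word w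
  rw [hw, List.length_eq_zero_iff] at hlen
  rw [← hprod, hlen, List.prod_nil]

lemma Adj.permLength_eq {s : Equiv.Perm (Fin n)} (hs : Adj s) : permLength s = 1 := by
  have h1 : permLength s ≤ 1 := permLength_le (l := [s]) (by simpa using hs) (by simp)
  have h0 : permLength s ≠ 0 := fun h0 => hs.ne_one (eq_one_of_permLength_eq_zero h0)
  omega

lemma prod_reverse_of_sq {l : List (Equiv.Perm (Fin n))} (h : ∀ s ∈ l, Adj s) :
    l.reverse.prod = l.prod⁻¹ := by
  induction l with
  | nil => simp
  | cons a l ih =>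
    have ha : a⁻¹ = a := (h a (by simp)).inv_eq
    simp only [List.reverse_cons, List.prod_append, List.prod_cons, List.prod_nil,
      mul_one, ih (fun s hs => h s (List.mem_cons_of_mem _ hs)), mul_inv_rev, ha]

lemma permLength_inv (w : Equiv.Perm (Fin n)) : permLength w⁻¹ = permLength w := by
  have key : ∀ u : Equiv.Perm (Fin n), permLength u⁻¹ ≤ permLength u := by
    intro u
    obtain ⟨l, hlen, hadj, hprod⟩ := exists_min_word u
    have := permLength_le (l := l.reverse)
      (fun s hs => hadj s (List.mem_reverse.mp hs))
      (by rw [prod_reverse_of_sq hadj, hprod])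
    simpa [hlen] using this
  have h1 := key w
  have h2 := key w⁻¹
  rw [inv_inv] at h2
  omega

lemma sign_word {l : List (Equiv.Perm (Fin n))} (h : ∀ s ∈ l, Adj s) :
    Equiv.Perm.sign l.prod = (-1) ^ l.length := by
  induction l with
  | nil => simp
  | cons a l ih =>
    rw [List.prod_cons, map_mul, (h a (by simp)).sign,
      ih (fun s hs => h s (List.mem_cons_of_mem _ hs)), List.length_cons, pow_succ,
      mul_comm]

lemma sign_eq (w : Equiv.Perm (Fin n)) :
    Equiv.Perm.sign w = (-1) ^ permLength w := by
  obtain ⟨l, hlen, hadj, hprod⟩ := exists_min_word w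
  subst hprod
  rw [sign_word hadj, hlen]

lemma permLength_mul_le {s w : Equiv.Perm (Fin n)} (hs : Adj s) :
    permLength (s * w) ≤ permLength w + 1 := by
  obtain ⟨l, hlen, hadj, hprod⟩ := exists_min_word w
  have := permLength_le (l := s :: l)
    (by
      intro t ht
      rcases List.mem_cons.mp ht with rfl | ht
      · exact hs
      · exact hadj t ht)
    (by rw [List.prod_cons, hprod])
  simpa [hlen] using this

lemma dichotomy {s : Equiv.Perm (Fin n)} (hs : Adj s) (w : Equiv.Perm (Fin n)) :
    permLength (s * w) = permLength w + 1 ∨ permLength w = permLength (s * w) + 1 := by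
  have h1 : permLength (s * w) ≤ permLength w + 1 := permLength_mul_le hs
  have h2 : permLength w ≤ permLength (s * w) + 1 := by
    have := permLength_mul_le (w := s * w) hs
    rwa [← mul_assoc, hs.sq, one_mul] at this
  have hne : permLength (s * w) ≠ permLength w := by
    intro heq
    have e1 : Equiv.Perm.sign (s * w) = Equiv.Perm.sign s * Equiv.Perm.sign w :=
      map_mul _ _ _
    rw [hs.sign, sign_eq, sign_eq, heq] at e1
    rcases Int.units_eq_one_or ((-1 : ℤˣ) ^ permLength w) with h | h <;> rw [h] at e1 <;>
      simp at e1
  omega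

end Stmt5Aux

/-- The Casimir element `Σ_w q^{-l(w)} T_w ⊗ T_{w⁻¹}` of the Hecke algebra is
central: for each generator `T_i = T_{(i,i+1)}`,
`Σ_w q^{-l(w)} T_i T_w ⊗ T_{w⁻¹} = Σ_w q^{-l(w)} T_w ⊗ T_{w⁻¹} T_i`. -/
theorem stmt5 (K : Type*) [Field K] [CharZero K] (n : ℕ) (q : K) (hq : q ≠ 0)
    (hroot : ∀ m : ℕ, 1 < m → q ^ m ≠ 1)
    (H : Type*) [Ring H] [Algebra K H]
    (T : Module.Basis (Equiv.Perm (Fin n)) K H)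
    (hone : T 1 = 1)
    (hmul : ∀ w u : Equiv.Perm (Fin n),
      permLength w + permLength u = permLength (w * u) → T w * T u = T (w * u))
    (hquad : ∀ (i : Fin n) (h : (i : ℕ) + 1 < n),
      T (Equiv.swap i ⟨(i : ℕ) + 1, h⟩) * T (Equiv.swap i ⟨(i : ℕ) + 1, h⟩)
        = (q - 1) • T (Equiv.swap i ⟨(i : ℕ) + 1, h⟩) + q • (1 : H)) :
    ∀ (i : Fin n) (h : (i : ℕ) + 1 < n),
      ∑ w : Equiv.Perm (Fin n), (q ^ permLength w)⁻¹ •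
          ((T (Equiv.swap i ⟨(i : ℕ) + 1, h⟩) * T w) ⊗ₜ[K] T w⁻¹)
        = ∑ w : Equiv.Perm (Fin n), (q ^ permLength w)⁻¹ •
          (T w ⊗ₜ[K] (T w⁻¹ * T (Equiv.swap i ⟨(i : ℕ) + 1, h⟩))) := by
  intro i h
  set s : Equiv.Perm (Fin n) := Equiv.swap i ⟨(i : ℕ) + 1, h⟩ with hs_def
  have hAdj : Stmt5Aux.Adj s := ⟨i, h, rfl⟩
  have hquad' : T s * T s = (q - 1) • T s + q • (1 : H) := hquad i h
  set F : Equiv.Perm (Fin n) → H ⊗[K] H := fun w =>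
    (q ^ permLength w)⁻¹ • ((T s * T w) ⊗ₜ[K] T w⁻¹) with hF_def
  set G : Equiv.Perm (Fin n) → H ⊗[K] H := fun w =>
    (q ^ permLength w)⁻¹ • (T w ⊗ₜ[K] (T w⁻¹ * T s)) with hG_def
  have key : ∀ w : Equiv.Perm (Fin n), permLength (s * w) = permLength w + 1 →
      F w + F (s * w) = G w + G (s * w) := by
    intro w hlsw
    have hTs : T s * T w = T (s * w) :=
      hmul s w (by rw [hAdj.permLength_eq, hlsw]; omega)
    have hinv_sw : (s * w)⁻¹ = w⁻¹ * s := by rw [mul_inv_rev, hAdj.inv_eq]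
    have hlinv : permLength w⁻¹ + permLength s = permLength (w⁻¹ * s) := by
      rw [← hinv_sw, Stmt5Aux.permLength_inv (s * w), hlsw,
        Stmt5Aux.permLength_inv w, hAdj.permLength_eq]
    have hT2 : T w⁻¹ * T s = T (w⁻¹ * s) := hmul _ _ hlinv
    have hT3 : T s * T (s * w) = (q - 1) • T (s * w) + q • T w := by
      rw [← hTs, ← mul_assoc, hquad', add_mul, smul_mul_assoc, smul_mul_assoc,
        one_mul, hTs]
    have hT4 : T (w⁻¹ * s) * T s = (q - 1) • T (w⁻¹ * s) + q • T w⁻¹ := by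
      rw [← hT2, mul_assoc, hquad', mul_add, mul_smul_comm, mul_smul_comm,
        mul_one, hT2]
    have hpow : (q ^ permLength (s * w))⁻¹ = (q ^ permLength w)⁻¹ * q⁻¹ := by
      rw [hlsw, pow_succ, mul_inv]
    simp only [hF_def, hG_def, hTs, hT3, hpow, hinv_sw, hT2, hT4,
      TensorProduct.add_tmul, TensorProduct.tmul_add, ← TensorProduct.smul_tmul',
      TensorProduct.tmul_smul, smul_add, smul_smul]
    match_scalars <;> field_simp <;> ring
  have key' : ∀ w : Equiv.Perm (Fin n), F w + F (s * w) = G w + G (s * w) := by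
    intro w
    rcases Stmt5Aux.dichotomy hAdj w with h1 | h1
    · exact key w h1
    · have h2 := key (s * w) (by rw [← mul_assoc, hAdj.sq, one_mul]; omega)
      rw [← mul_assoc, hAdj.sq, one_mul] at h2
      rw [add_comm (F w), add_comm (G w)]
      exact h2
  have hsum : ∀ (P : Equiv.Perm (Fin n) → H ⊗[K] H),
      ∑ w : Equiv.Perm (Fin n), P (s * w) = ∑ w : Equiv.Perm (Fin n), P w :=
    fun P => Equiv.sum_comp (Equiv.mulLeft s) P
  have h2 : (2 : K) • ∑ w : Equiv.Perm (Fin n), F w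
      = (2 : K) • ∑ w : Equiv.Perm (Fin n), G w := by
    rw [two_smul, two_smul]
    calc (∑ w : Equiv.Perm (Fin n), F w) + ∑ w : Equiv.Perm (Fin n), F w
        = (∑ w : Equiv.Perm (Fin n), F w) + ∑ w : Equiv.Perm (Fin n), F (s * w) := by
          rw [hsum F]
      _ = ∑ w : Equiv.Perm (Fin n), (F w + F (s * w)) := by
          rw [Finset.sum_add_distrib]
      _ = ∑ w : Equiv.Perm (Fin n), (G w + G (s * w)) :=
          Finset.sum_congr rfl (fun w _ => key' w)
      _ = (∑ w : Equiv.Perm (Fin n), G w) + ∑ w : Equiv.Perm (Fin n), G (s * w) := by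
          rw [Finset.sum_add_distrib]
      _ = (∑ w : Equiv.Perm (Fin n), G w) + ∑ w : Equiv.Perm (Fin n), G w := by
          rw [hsum G]
  have h3 := congrArg (fun x => (2 : K)⁻¹ • x) h2
  simpa [smul_smul, inv_mul_cancel₀ (two_ne_zero (α := K))] using h3
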